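/- Let x_1,...,x_N : [0,∞) → ℝ^d be a solution of the first-order cooperative system with communication failures (fixed scaling). Then the function γ_max(t) := max_{i ∈ {1,...,N}} |x_i(t)| is non-increasing on [0,∞). -/

import Mathlib

open MeasureTheory Set Filter Topology
open scoped RealInnerProductSpace

variable {E : Type*} [NormedAddCommGroup E] [InnerProductSpace ℝ E] [CompleteSpace E]

/-- Integrability of `u ↦ ⟪∫_{(a,u]} f, g u⟫` on `(a,b]`. -/
lemma aux_int_inner_primitive {a b : ℝ} {f g : ℝ → E}
    (hf : IntegrableOn f (Ioc a b)) (hg : IntegrableOn g (Ioc a b)) :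
    Integrable (fun u => ⟪∫ v in Ioc a u, f v, g u⟫) (volume.restrict (Ioc a b)) := by
  have hYc : ContinuousOn (fun u => ∫ v in Ioc a u, f v) (Icc a b) :=
    intervalIntegral.continuousOn_primitive ((integrableOn_Icc_iff_integrableOn_Ioc (by simp)).2 hf)
  have hYm : AEStronglyMeasurable (fun u => ∫ v in Ioc a u, f v) (volume.restrict (Ioc a b)) :=
    (hYc.mono Ioc_subset_Icc_self).aestronglyMeasurable measurableSet_Ioc
  refine Integrable.mono' (hg.norm.const_mul (∫ v in Ioc a b, ‖f v‖)) (hYm.inner hg.1) ?_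
  refine (ae_restrict_iff' measurableSet_Ioc).2 (Eventually.of_forall fun u hu => ?_)
  calc ‖⟪∫ v in Ioc a u, f v, g u⟫‖ ≤ ‖∫ v in Ioc a u, f v‖ * ‖g u‖ := by
        rw [Real.norm_eq_abs]; exact abs_real_inner_le_norm _ _
    _ ≤ (∫ v in Ioc a b, ‖f v‖) * ‖g u‖ := by
        refine mul_le_mul_of_nonneg_right ?_ (norm_nonneg _)
        refine le_trans (norm_integral_le_integral_norm _) ?_
        exact setIntegral_mono_set hf.norm (Eventually.of_forall fun v => norm_nonneg _)
          (HasSubset.Subset.eventuallyLE (Ioc_subset_Ioc_right hu.2))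

/-- The symmetrization/Fubini identity for primitives. -/
lemma aux_fubini {a b : ℝ} {f g : ℝ → E}
    (hf : IntegrableOn f (Ioc a b)) (hg : IntegrableOn g (Ioc a b)) :
    (∫ u in Ioc a b, ⟪f u, ∫ v in Ioc a u, g v⟫) +
      (∫ u in Ioc a b, ⟪∫ v in Ioc a u, f v, g u⟫)
      = ⟪∫ u in Ioc a b, f u, ∫ u in Ioc a b, g u⟫ := by
  set μ := volume.restrict (Ioc a b) with hμ
  set k : ℝ × ℝ → ℝ := fun p => if p.2 ≤ p.1 then ⟪f p.1, g p.2⟫ else 0 with hk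
  have hS : MeasurableSet {p : ℝ × ℝ | p.2 ≤ p.1} :=
    measurableSet_le measurable_snd measurable_fst
  have hk_aesm : AEStronglyMeasurable k (μ.prod μ) := by
    have h1 : AEStronglyMeasurable (fun p : ℝ × ℝ => ⟪f p.1, g p.2⟫) (μ.prod μ) :=
      (hf.aestronglyMeasurable.comp_fst).inner (hg.aestronglyMeasurable.comp_snd)
    have hkk : k = {p : ℝ × ℝ | p.2 ≤ p.1}.indicator (fun p => ⟪f p.1, g p.2⟫) := by
      ext p; simp [hk, Set.indicator_apply]
    rw [hkk]; exact h1.indicator hS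
  have hk_int : Integrable k (μ.prod μ) := by
    refine Integrable.mono' (hf.norm.mul_prod hg.norm) hk_aesm
      (Eventually.of_forall fun p => ?_)
    by_cases h : p.2 ≤ p.1
    · simp only [hk, h, if_true, Real.norm_eq_abs]
      exact abs_real_inner_le_norm (f p.1) (g p.2)
    · simp only [hk, h, if_false, norm_zero]
      positivity
  -- first integral as a double integral
  have hA1 : (∫ u in Ioc a b, ⟪f u, ∫ v in Ioc a u, g v⟫)
      = ∫ u, (∫ v, k (u, v) ∂μ) ∂μ := by
    refine setIntegral_congr_fun measurableSet_Ioc fun u hu => ?_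
    have hGind : (∫ v in Ioc a u, g v) = ∫ v, (Ioc a u).indicator g v ∂μ := by
      rw [hμ, integral_indicator measurableSet_Ioc,
        Measure.restrict_restrict measurableSet_Ioc,
        inter_eq_left.mpr (Ioc_subset_Ioc_right hu.2)]
    rw [hGind, ← integral_inner (hg.indicator measurableSet_Ioc)]
    refine setIntegral_congr_fun measurableSet_Ioc fun v hv => ?_
    by_cases h : v ≤ u
    · have hvm : v ∈ Ioc a u := ⟨hv.1, h⟩
      simp [hk, h, Set.indicator_of_mem hvm]
    · have hvm : v ∉ Ioc a u := fun hc => h hc.2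
      simp [hk, h, Set.indicator_of_notMem hvm]
  -- swap
  have hswap : ∫ u, (∫ v, k (u, v) ∂μ) ∂μ = ∫ v, (∫ u, k (u, v) ∂μ) ∂μ := by
    have : Function.uncurry (fun u v => k (u, v)) = k := by
      ext p; simp [Function.uncurry]
    exact integral_integral_swap (by rw [this]; exact hk_int)
  -- evaluate the swapped inner integral
  have hEval : ∫ v, (∫ u, k (u, v) ∂μ) ∂μ
      = ∫ v in Ioc a b, ⟪(∫ u in Ioc a b, f u) - ∫ u in Ioc a v, f u, g v⟫ := by
    refine setIntegral_congr_fun measurableSet_Ioc fun v hv => ?_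
    have h1 : ∀ u, k (u, v) = (Ici v).indicator (fun u => ⟪f u, g v⟫) u := by
      intro u; by_cases h : v ≤ u <;> simp [hk, h, Set.indicator_apply]
    have h2 : Ioc a b ∩ Ici v = Icc v b := by
      ext w
      simp only [mem_inter_iff, mem_Ioc, mem_Ici, mem_Icc]
      constructor
      · rintro ⟨⟨h3, h4⟩, h5⟩; exact ⟨h5, h4⟩
      · rintro ⟨h3, h4⟩; exact ⟨⟨lt_of_lt_of_le hv.1 h3, h4⟩, h3⟩
    calc (∫ u, k (u, v) ∂μ) = ∫ u, (Ici v).indicator (fun u => ⟪f u, g v⟫) u ∂μ := by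
          simp_rw [h1]
      _ = ∫ u in Ioc a b ∩ Ici v, ⟪f u, g v⟫ := by
          rw [hμ, integral_indicator measurableSet_Ici,
            Measure.restrict_restrict measurableSet_Ici, inter_comm]
      _ = ∫ u in Ioc v b, ⟪f u, g v⟫ := by
          rw [h2, integral_Icc_eq_integral_Ioc]
      _ = ⟪∫ u in Ioc v b, f u, g v⟫ := by
          simp_rw [real_inner_comm (g v)]
          exact integral_inner (hf.mono_set (Ioc_subset_Ioc_left hv.1.le)) (g v)
      _ = ⟪(∫ u in Ioc a b, f u) - ∫ u in Ioc a v, f u, g v⟫ := by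
          congr 1
          have hsplit : (∫ u in Ioc a b, f u)
              = (∫ u in Ioc a v, f u) + ∫ u in Ioc v b, f u := by
            rw [← setIntegral_union (Set.Ioc_disjoint_Ioc_of_le le_rfl) measurableSet_Ioc
              (hf.mono_set (Ioc_subset_Ioc_right hv.2)) (hf.mono_set (Ioc_subset_Ioc_left hv.1.le)),
              Ioc_union_Ioc_eq_Ioc hv.1.le hv.2]
          rw [hsplit]; abel
  rw [hA1, hswap, hEval]
  have hsub : (∫ v in Ioc a b, ⟪(∫ u in Ioc a b, f u) - ∫ u in Ioc a v, f u, g v⟫)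
      = (∫ v in Ioc a b, ⟪∫ u in Ioc a b, f u, g v⟫)
        - ∫ v in Ioc a b, ⟪∫ u in Ioc a v, f u, g v⟫ := by
    rw [← integral_sub (hg.const_inner _) (aux_int_inner_primitive hf hg)]
    refine setIntegral_congr_fun measurableSet_Ioc fun v hv => ?_
    rw [inner_sub_left]
  rw [hsub]
  have : (∫ v in Ioc a b, ⟪∫ u in Ioc a b, f u, g v⟫)
      = ⟪∫ u in Ioc a b, f u, ∫ v in Ioc a b, g v⟫ := integral_inner hg _
  rw [this]; ring

/-- Integral form of the product rule for inner products of "primitives". -/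
lemma aux_prod_rule {a b : ℝ} (hab : a ≤ b) {f g y z : ℝ → E} {c e : E}
    (hf : IntegrableOn f (Ioc a b)) (hg : IntegrableOn g (Ioc a b))
    (hy : ∀ u ∈ Icc a b, y u = c + ∫ v in Ioc a u, f v)
    (hz : ∀ u ∈ Icc a b, z u = e + ∫ v in Ioc a u, g v) :
    ⟪y b, z b⟫ = ⟪c, e⟫ + ∫ u in Ioc a b, (⟪f u, z u⟫ + ⟪y u, g u⟫) := by
  have h1 : IntegrableOn (fun u => ⟪f u, e⟫) (Ioc a b) := hf.inner_const e
  have h2 : IntegrableOn (fun u => ⟪c, g u⟫) (Ioc a b) := hg.const_inner c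
  have h3 : IntegrableOn (fun u => ⟪f u, ∫ v in Ioc a u, g v⟫) (Ioc a b) := by
    have := aux_int_inner_primitive hg hf
    refine this.congr ?_
    refine (ae_restrict_iff' measurableSet_Ioc).2 (Eventually.of_forall fun u _ => ?_)
    exact real_inner_comm _ _
  have h4 : IntegrableOn (fun u => ⟪∫ v in Ioc a u, f v, g u⟫) (Ioc a b) :=
    aux_int_inner_primitive hf hg
  have hcong : (∫ u in Ioc a b, (⟪f u, z u⟫ + ⟪y u, g u⟫))
      = ∫ u in Ioc a b, ((⟪f u, e⟫ + ⟪c, g u⟫) +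
          (⟪f u, ∫ v in Ioc a u, g v⟫ + ⟪∫ v in Ioc a u, f v, g u⟫)) := by
    refine setIntegral_congr_fun measurableSet_Ioc fun u hu => ?_
    rw [hy u (Ioc_subset_Icc_self hu), hz u (Ioc_subset_Icc_self hu),
      inner_add_right, inner_add_left]
    ring
  have h12 : IntegrableOn (fun u => ⟪f u, e⟫ + ⟪c, g u⟫) (Ioc a b) := h1.add h2
  have h34 : IntegrableOn (fun u =>
      ⟪f u, ∫ v in Ioc a u, g v⟫ + ⟪∫ v in Ioc a u, f v, g u⟫) (Ioc a b) := h3.add h4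
  rw [hcong, integral_add h12 h34, integral_add h1 h2,
    integral_add h3 h4, aux_fubini hf hg]
  have e1 : (∫ u in Ioc a b, ⟪f u, e⟫) = ⟪∫ u in Ioc a b, f u, e⟫ := by
    simp_rw [real_inner_comm e]
    exact integral_inner hf e
  have e2 : (∫ u in Ioc a b, ⟪c, g u⟫) = ⟪c, ∫ u in Ioc a b, g u⟫ := integral_inner hg c
  rw [e1, e2, hy b ⟨hab, le_rfl⟩, hz b ⟨hab, le_rfl⟩, inner_add_left, inner_add_right,
    inner_add_right]
  ring

set_option maxHeartbeats 2000000 in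
/-- Along a solution of the first-order cooperative system
with communication failures (fixed scaling), the function
`γ_max(t) = max_i ‖x i t‖` is non-increasing on `[0, ∞)`. -/
theorem gammaMax_antitone
    (d N : ℕ) (hN : 2 ≤ N)
    (φ : ℝ → ℝ)
    (hφ_lip : ∃ K : NNReal, LipschitzOnWith K φ (Ici 0))
    (hφ_pos : ∀ r : ℝ, 0 ≤ r → 0 < φ r)
    (M : Fin N → Fin N → ℝ → ℝ)
    (hM_meas : ∀ i j, Measurable (M i j))
    (hM_range : ∀ i j, ∀ t : ℝ, 0 ≤ t → M i j t ∈ Icc (0:ℝ) 1)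
    (x : Fin N → ℝ → EuclideanSpace ℝ (Fin d))
    (hx_cont : ∀ i, ContinuousOn (x i) (Ici 0))
    (hx_sol : ∀ i, ∀ t : ℝ, 0 ≤ t → x i t = x i 0 +
      ∫ s in (0:ℝ)..t,
        (N : ℝ)⁻¹ • ∑ j, (M i j s * φ ‖x i s - x j s‖) • (x j s - x i s)) :
    AntitoneOn (fun t : ℝ => ⨆ i, ‖x i t‖) (Ici 0) := by
  obtain ⟨Kφ, hKφ⟩ := hφ_lip
  haveI : Nonempty (Fin N) := ⟨⟨0, by omega⟩⟩
  have hNR : (0:ℝ) < N := by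
    have : 0 < N := by omega
    exact_mod_cast this
  have key : ∀ s : ℝ, 0 ≤ s → ∀ R : ℝ, (∀ j, ‖x j s‖ < R) →
      ∀ t, s ≤ t → ∀ j, ‖x j t‖ < R := by
    intro s hs R hR t hst
    by_contra hcon
    push_neg at hcon
    obtain ⟨i0, hi0⟩ := hcon
    have hRpos : 0 < R := lt_of_le_of_lt (norm_nonneg _) (hR i0)
    set Bset : Set ℝ := {u | u ∈ Icc s t ∧ ∃ j, R ≤ ‖x j u‖} with hBdef
    have hBne : Bset.Nonempty := ⟨t, ⟨⟨hst, le_rfl⟩, i0, hi0⟩⟩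
    have hIccsub : Icc s t ⊆ Ici (0:ℝ) := fun u hu => hs.trans hu.1
    have hBclosed : IsClosed Bset := by
      have hBeq : Bset = ⋃ j : Fin N, (Icc s t ∩ (fun u => ‖x j u‖) ⁻¹' Ici R) := by
        ext u
        simp only [hBdef, mem_setOf_eq, mem_iUnion, mem_inter_iff, mem_preimage, mem_Ici]
        tauto
      rw [hBeq]
      exact isClosed_iUnion_of_finite fun j =>
        (((hx_cont j).mono hIccsub).norm).preimage_isClosed_of_isClosed isClosed_Icc isClosed_Ici
    have hBcpt : IsCompact Bset := isCompact_Icc.of_isClosed_subset hBclosed fun u hu => hu.1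
    set t₀ := sInf Bset with ht₀def
    have ht₀B : t₀ ∈ Bset := hBcpt.sInf_mem hBne
    have ht₀I : t₀ ∈ Icc s t := ht₀B.1
    obtain ⟨i, hi⟩ := ht₀B.2
    have hslt : s < t₀ := by
      rcases eq_or_lt_of_le ht₀I.1 with h | h
      · exact absurd hi (not_le.2 (h ▸ hR i))
      · exact h
    have h0t₀ : 0 ≤ t₀ := hs.trans ht₀I.1
    have hlt : ∀ u, s ≤ u → u < t₀ → ∀ j, ‖x j u‖ < R := by
      intro u hsu hut j
      by_contra hge
      push_neg at hge
      have hmem : u ∈ Bset := ⟨⟨hsu, hut.le.trans ht₀I.2⟩, j, hge⟩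
      exact absurd (csInf_le hBcpt.bddBelow hmem) (not_le.2 hut)
    have hle : ∀ j, ∀ u ∈ Icc s t₀, ‖x j u‖ ≤ R := by
      intro j u hu
      rcases lt_or_eq_of_le hu.2 with h | h
      · exact (hlt u hu.1 h j).le
      · have hsu : s < u := by rw [h]; exact hslt
        have hcont : ContinuousWithinAt (fun w => ‖x j w‖) (Icc s u) u :=
          (((hx_cont j).mono fun w hw => hs.trans hw.1).norm).continuousWithinAt ⟨hu.1, le_rfl⟩
        have htend : Tendsto (fun w => ‖x j w‖) (𝓝[<] u) (𝓝 ‖x j u‖) := by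
          have h2 := hcont.mono (Ioo_subset_Icc_self (a := s) (b := u))
          rw [← nhdsWithin_Ioo_eq_nhdsLT hsu]
          exact h2
        refine le_of_tendsto htend ?_
        filter_upwards [Ioo_mem_nhdsLT_of_mem (⟨hsu, le_rfl⟩ : u ∈ Ioc s u)] with w hw
        exact (hlt w hw.1.le (h ▸ hw.2) j).le
    -- global bound on `Icc 0 t₀`
    obtain ⟨B, hB⟩ : ∃ B, ∀ j : Fin N, ∀ u ∈ Icc 0 t₀, ‖x j u‖ ≤ B := by
      have hBd : ∀ j : Fin N, ∃ C, ∀ u ∈ Icc 0 t₀, ‖x j u‖ ≤ C := fun j =>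
        isCompact_Icc.exists_bound_of_continuousOn ((hx_cont j).mono Icc_subset_Ici_self)
      choose C hC using hBd
      refine ⟨Finset.univ.sup' Finset.univ_nonempty C, fun j u hu => (hC j u hu).trans ?_⟩
      exact Finset.le_sup' C (Finset.mem_univ j)
    have hB0 : 0 ≤ B := (norm_nonneg _).trans (hB i 0 ⟨le_rfl, h0t₀⟩)
    have hφle : ∀ r : ℝ, 0 ≤ r → φ r ≤ |φ 0| + Kφ * r := by
      intro r hr
      have hd := hKφ.dist_le_mul r (mem_Ici.2 hr) 0 (mem_Ici.2 le_rfl)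
      rw [Real.dist_eq, Real.dist_eq, sub_zero, abs_of_nonneg hr] at hd
      have h1 := (abs_le.1 hd).2
      have h2 := le_abs_self (φ 0)
      linarith
    set F : ℝ → EuclideanSpace ℝ (Fin d) := fun u =>
      (N : ℝ)⁻¹ • ∑ j, (M i j u * φ ‖x i u - x j u‖) • (x j u - x i u) with hFdef
    clear_value F
    have hsub0 : Ioc (0:ℝ) t₀ ⊆ Ici 0 := fun u hu => hu.1.le
    have hxaesm : ∀ j : Fin N, AEStronglyMeasurable (x j) (volume.restrict (Ioc 0 t₀)) :=
      fun j => ((hx_cont j).mono hsub0).aestronglyMeasurable measurableSet_Ioc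
    have hφaesm : ∀ j : Fin N,
        AEStronglyMeasurable (fun u => φ ‖x i u - x j u‖) (volume.restrict (Ioc 0 t₀)) := by
      intro j
      have hcn : ContinuousOn (fun u => ‖x i u - x j u‖) (Ioc 0 t₀) :=
        (((hx_cont i).mono hsub0).sub ((hx_cont j).mono hsub0)).norm
      exact (hKφ.continuousOn.comp hcn fun u hu =>
        mem_Ici.2 (norm_nonneg _)).aestronglyMeasurable measurableSet_Ioc
    have hFaesm : AEStronglyMeasurable F (volume.restrict (Ioc 0 t₀)) := by
      rw [hFdef]
      refine AEStronglyMeasurable.fun_const_smul ?_ _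
      refine Finset.aestronglyMeasurable_fun_sum _ fun j _ => ?_
      exact ((hM_meas i j).aestronglyMeasurable.mul (hφaesm j)).smul ((hxaesm j).sub (hxaesm i))
    set CB : ℝ := |φ 0| + Kφ * (2*B) with hCBdef
    clear_value CB
    have hKφ0 : (0:ℝ) ≤ Kφ := Kφ.2
    have hCB0 : 0 ≤ CB := by rw [hCBdef]; positivity
    have haj : ∀ (j : Fin N) (u : ℝ), 0 ≤ u → u ≤ t₀ →
        0 ≤ M i j u * φ ‖x i u - x j u‖ ∧ M i j u * φ ‖x i u - x j u‖ ≤ CB := by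
      intro j u hu0 hut
      have hM := hM_range i j u hu0
      have hφp := hφ_pos _ (norm_nonneg (x i u - x j u))
      refine ⟨mul_nonneg hM.1 hφp.le, ?_⟩
      have harg : ‖x i u - x j u‖ ≤ 2*B := by
        calc ‖x i u - x j u‖ ≤ ‖x i u‖ + ‖x j u‖ := norm_sub_le _ _
          _ ≤ B + B := add_le_add (hB i u ⟨hu0, hut⟩) (hB j u ⟨hu0, hut⟩)
          _ = 2*B := by ring
      have h1 : φ ‖x i u - x j u‖ ≤ CB := by
        refine (hφle _ (norm_nonneg _)).trans ?_
        rw [hCBdef]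
        nlinarith
      nlinarith [hM.1, hM.2, hφp.le]
    have hFbd : ∀ u : ℝ, 0 ≤ u → u ≤ t₀ → ‖F u‖ ≤ CB * (2*B) := by
      intro u hu0 hut
      have hstep : ∀ j : Fin N,
          ‖(M i j u * φ ‖x i u - x j u‖) • (x j u - x i u)‖ ≤ CB * (2*B) := by
        intro j
        rw [norm_smul, Real.norm_eq_abs, abs_of_nonneg (haj j u hu0 hut).1]
        have h2 : ‖x j u - x i u‖ ≤ 2*B := by
          calc ‖x j u - x i u‖ ≤ ‖x j u‖ + ‖x i u‖ := norm_sub_le _ _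
            _ ≤ B + B := add_le_add (hB j u ⟨hu0, hut⟩) (hB i u ⟨hu0, hut⟩)
            _ = 2*B := by ring
        exact mul_le_mul (haj j u hu0 hut).2 h2 (norm_nonneg _) hCB0
      calc ‖F u‖ = (N:ℝ)⁻¹ * ‖∑ j, (M i j u * φ ‖x i u - x j u‖) • (x j u - x i u)‖ := by
            rw [hFdef]
            rw [norm_smul, Real.norm_eq_abs, abs_of_nonneg (inv_nonneg.2 hNR.le)]
        _ ≤ (N:ℝ)⁻¹ * ∑ j : Fin N, CB * (2*B) := by
            refine mul_le_mul_of_nonneg_left ?_ (inv_nonneg.2 hNR.le)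
            exact (norm_sum_le _ _).trans (Finset.sum_le_sum fun j _ => hstep j)
        _ = CB * (2*B) := by
            rw [Finset.sum_const, Finset.card_univ, Fintype.card_fin, nsmul_eq_mul]
            field_simp
    have hFint : IntegrableOn F (Ioc 0 t₀) := by
      refine Integrable.mono' (g := fun _ => CB * (2*B))
        (integrableOn_const measure_Ioc_lt_top.ne) hFaesm ?_
      exact (ae_restrict_iff' measurableSet_Ioc).2
        (Eventually.of_forall fun u hu => hFbd u hu.1.le hu.2)
    have hII : ∀ u₁ u₂ : ℝ, 0 ≤ u₁ → u₁ ≤ u₂ → u₂ ≤ t₀ →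
        IntervalIntegrable F volume u₁ u₂ := by
      intro u₁ u₂ h1 h2 h3
      rw [intervalIntegrable_iff_integrableOn_Ioc_of_le h2]
      exact hFint.mono_set (Ioc_subset_Ioc h1 h3)
    have hxeq : ∀ u₁ u₂ : ℝ, 0 ≤ u₁ → u₁ ≤ u₂ → u₂ ≤ t₀ →
        x i u₂ = x i u₁ + ∫ v in Ioc u₁ u₂, F v := by
      intro u₁ u₂ h1 h2 h3
      have e1 := hx_sol i u₁ h1
      have e2 := hx_sol i u₂ (h1.trans h2)
      rw [← hFdef] at e1 e2
      have hsplit := intervalIntegral.integral_add_adjacent_intervals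
        (hII 0 u₁ le_rfl h1 (h2.trans h3)) (hII u₁ u₂ h1 h2 h3)
      rw [← intervalIntegral.integral_of_le h2]
      rw [e1, e2, ← hsplit]
      abel
    set h : ℝ → ℝ := fun u => ⟪F u, x i u⟫ + ⟪x i u, F u⟫ with hhdef
    clear_value h
    have hchain : ∀ u ∈ Icc s t₀, ‖x i u‖^2 = ‖x i s‖^2 + ∫ w in Ioc s u, h w := by
      intro u hu
      have hFs : IntegrableOn F (Ioc s u) :=
        hFint.mono_set (Ioc_subset_Ioc hs hu.2)
      have hyy : ∀ w ∈ Icc s u, x i w = x i s + ∫ v in Ioc s w, F v :=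
        fun w hw => hxeq s w hs hw.1 (hw.2.trans hu.2)
      have happ := aux_prod_rule (E := EuclideanSpace ℝ (Fin d)) hu.1 hFs hFs hyy hyy
      rw [real_inner_self_eq_norm_sq, real_inner_self_eq_norm_sq] at happ
      rw [← hhdef] at happ
      exact happ
    have hhint : IntegrableOn h (Ioc s t₀) := by
      have hres : volume.restrict (Ioc s t₀) ≤ volume.restrict (Ioc 0 t₀) :=
        Measure.restrict_mono (Ioc_subset_Ioc_left hs) le_rfl
      have hxi' : AEStronglyMeasurable (x i) (volume.restrict (Ioc s t₀)) :=
        (hxaesm i).mono_measure hres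
      have hF' : AEStronglyMeasurable F (volume.restrict (Ioc s t₀)) :=
        hFaesm.mono_measure hres
      have hmeas : AEStronglyMeasurable h (volume.restrict (Ioc s t₀)) := by
        rw [hhdef]
        exact (hF'.inner hxi').add (hxi'.inner hF')
      refine Integrable.mono' (g := fun _ => CB*(2*B)*B + B*(CB*(2*B)))
        (integrableOn_const measure_Ioc_lt_top.ne) hmeas ?_
      refine (ae_restrict_iff' measurableSet_Ioc).2 (Eventually.of_forall fun u hu => ?_)
      have h1 : ‖x i u‖ ≤ B := hB i u ⟨hs.trans hu.1.le, hu.2⟩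
      have h2 : ‖F u‖ ≤ CB*(2*B) := hFbd u (hs.trans hu.1.le) hu.2
      rw [hhdef]
      calc ‖⟪F u, x i u⟫ + ⟪x i u, F u⟫‖ ≤ ‖⟪F u, x i u⟫‖ + ‖⟪x i u, F u⟫‖ := norm_add_le _ _
        _ ≤ ‖F u‖*‖x i u‖ + ‖x i u‖*‖F u‖ := by
            rw [Real.norm_eq_abs, Real.norm_eq_abs]
            exact add_le_add (abs_real_inner_le_norm _ _) (abs_real_inner_le_norm _ _)
        _ ≤ CB*(2*B)*B + B*(CB*(2*B)) := by
            have := norm_nonneg (F u); have := norm_nonneg (x i u)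
            nlinarith
    set CR : ℝ := |φ 0| + Kφ * (2*R) with hCRdef
    clear_value CR
    have hCR0 : 0 ≤ CR := by rw [hCRdef]; positivity
    set K : ℝ := 2*CR with hKdef
    clear_value K
    have hkey : ∀ u ∈ Icc s t₀, h u + K * (‖x i u‖^2 - R^2) ≤ 0 := by
      intro u hu
      have hu0 : 0 ≤ u := hs.trans hu.1
      have hr : ‖x i u‖ ≤ R := hle i u hu
      have hr0 : 0 ≤ ‖x i u‖ := norm_nonneg _
      have hterm : ∀ j : Fin N, (M i j u * φ ‖x i u - x j u‖) * ⟪x i u, x j u - x i u⟫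
          ≤ CR * (‖x i u‖ * (R - ‖x i u‖)) := by
        intro j
        have hxj : ‖x j u‖ ≤ R := hle j u hu
        have hip : ⟪x i u, x j u - x i u⟫ ≤ ‖x i u‖ * (R - ‖x i u‖) := by
          rw [inner_sub_right, real_inner_self_eq_norm_sq]
          have hcs := real_inner_le_norm (x i u) (x j u)
          nlinarith
        have hM := hM_range i j u hu0
        have hφp := hφ_pos _ (norm_nonneg (x i u - x j u))
        have ha0 : 0 ≤ M i j u * φ ‖x i u - x j u‖ := mul_nonneg hM.1 hφp.le
        have haR : M i j u * φ ‖x i u - x j u‖ ≤ CR := by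
          have harg : ‖x i u - x j u‖ ≤ 2*R := by
            calc ‖x i u - x j u‖ ≤ ‖x i u‖ + ‖x j u‖ := norm_sub_le _ _
              _ ≤ R + R := add_le_add hr hxj
              _ = 2*R := by ring
          have h1 : φ ‖x i u - x j u‖ ≤ CR := by
            refine (hφle _ (norm_nonneg _)).trans ?_
            rw [hCRdef]; nlinarith
          nlinarith [hM.1, hM.2, hφp.le]
        calc (M i j u * φ ‖x i u - x j u‖) * ⟪x i u, x j u - x i u⟫
            ≤ (M i j u * φ ‖x i u - x j u‖) * (‖x i u‖ * (R - ‖x i u‖)) :=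
              mul_le_mul_of_nonneg_left hip ha0
          _ ≤ CR * (‖x i u‖ * (R - ‖x i u‖)) := by
              refine mul_le_mul_of_nonneg_right haR ?_
              nlinarith
      have hinner : ⟪x i u, F u⟫ ≤ CR * (‖x i u‖ * (R - ‖x i u‖)) := by
        have hexp : ⟪x i u, F u⟫
            = (N:ℝ)⁻¹ * ∑ j, (M i j u * φ ‖x i u - x j u‖) * ⟪x i u, x j u - x i u⟫ := by
          rw [hFdef]
          rw [real_inner_smul_right, inner_sum]
          congr 1
          refine Finset.sum_congr rfl fun j _ => ?_
          rw [real_inner_smul_right]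
        rw [hexp]
        calc (N:ℝ)⁻¹ * ∑ j, (M i j u * φ ‖x i u - x j u‖) * ⟪x i u, x j u - x i u⟫
            ≤ (N:ℝ)⁻¹ * ∑ j : Fin N, CR * (‖x i u‖ * (R - ‖x i u‖)) := by
              refine mul_le_mul_of_nonneg_left (Finset.sum_le_sum fun j _ => hterm j)
                (inv_nonneg.2 hNR.le)
          _ = CR * (‖x i u‖ * (R - ‖x i u‖)) := by
              rw [Finset.sum_const, Finset.card_univ, Fintype.card_fin, nsmul_eq_mul]
              field_simp
      have hhu : h u = 2 * ⟪x i u, F u⟫ := by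
        rw [hhdef]; dsimp only
        rw [real_inner_comm]; ring
      rw [hhu, hKdef]
      nlinarith [mul_nonneg hCR0 (mul_nonneg hRpos.le (sub_nonneg.2 hr))]
    set ψ : ℝ → ℝ := fun u => ‖x i u‖^2 - R^2 with hψdef
    clear_value ψ
    have hψs : ψ s < 0 := by
      rw [hψdef]; dsimp only
      nlinarith [hR i, norm_nonneg (x i s)]
    have hψeq : ∀ u ∈ Icc s t₀, ψ u = ψ s + ∫ w in Ioc s u, h w := by
      intro u hu
      rw [hψdef]; dsimp only
      rw [hchain u hu]; ring
    have hcontexp : Continuous (fun w : ℝ => K * Real.exp (K*w)) :=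
      continuous_const.mul (Real.continuous_exp.comp (continuous_const.mul continuous_id))
    have hgz : IntegrableOn (fun w => K * Real.exp (K*w)) (Ioc s t₀) :=
      hcontexp.integrableOn_Ioc
    have hzexp : ∀ u ∈ Icc s t₀, Real.exp (K*u)
        = Real.exp (K*s) + ∫ w in Ioc s u, K * Real.exp (K*w) := by
      intro u hu
      have hder : ∀ w ∈ uIcc s u, HasDerivAt (fun w => Real.exp (K*w)) (K * Real.exp (K*w)) w := by
        intro w _
        have h1 : HasDerivAt (fun w : ℝ => K * w) K w := by
          simpa using (hasDerivAt_id w).const_mul K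
        simpa [mul_comm] using h1.exp
      have hci : IntervalIntegrable (fun w => K * Real.exp (K*w)) volume s u :=
        hcontexp.intervalIntegrable s u
      have := intervalIntegral.integral_eq_sub_of_hasDerivAt hder hci
      rw [← intervalIntegral.integral_of_le hu.1, this]
      ring
    have happ2 := aux_prod_rule (E := ℝ) hslt.le hhint hgz hψeq hzexp
    simp only [RCLike.inner_apply, starRingEnd_apply, star_trivial] at happ2
    have hint_nonpos :
        (∫ u in Ioc s t₀, (h u * Real.exp (K*u) + ψ u * (K * Real.exp (K*u)))) ≤ 0 := by
      refine integral_nonpos_of_ae ((ae_restrict_iff' measurableSet_Ioc).2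
        (Eventually.of_forall fun u hu => ?_))
      have hk := hkey u (Ioc_subset_Icc_self hu)
      have hψu : ψ u = ‖x i u‖^2 - R^2 := by rw [hψdef]
      have hexp := Real.exp_pos (K*u)
      simp only [Pi.zero_apply]
      rw [hψu]
      nlinarith [mul_le_mul_of_nonneg_right hk hexp.le]
    have hfinal : ψ t₀ * Real.exp (K*t₀) ≤ ψ s * Real.exp (K*s) := by
      rw [mul_comm (ψ t₀), mul_comm (ψ s), happ2]
      have heq : (∫ u in Ioc s t₀, Real.exp (K * u) * h u + K * Real.exp (K * u) * ψ u)
          = ∫ u in Ioc s t₀, (h u * Real.exp (K*u) + ψ u * (K * Real.exp (K*u))) := by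
        congr 1; ext u; ring
      linarith
    have hψt₀ : ψ t₀ < 0 := by
      by_contra hge
      push_neg at hge
      nlinarith [Real.exp_pos (K*t₀), Real.exp_pos (K*s)]
    rw [hψdef] at hψt₀
    dsimp only at hψt₀
    nlinarith [hi, hRpos]
  -- final assembly
  intro s hs t ht hst
  dsimp only
  refine ciSup_le fun i => ?_
  by_contra hgt
  push_neg at hgt
  have hγj : ∀ j, ‖x j s‖ ≤ ⨆ j, ‖x j s‖ := fun j =>
    le_ciSup (f := fun j => ‖x j s‖) (Set.Finite.bddAbove (Set.finite_range _)) j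
  have hk := key s hs ((⨆ j, ‖x j s‖) + (‖x i t‖ - ⨆ j, ‖x j s‖)/2)
    (fun j => lt_of_le_of_lt (hγj j) (by linarith)) t hst i
  linarith
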